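/- Let m ≥ 1 and let n_1, …, n_m be natural numbers with indices i_1, …, i_m satisfying 0 ≤ i_j ≤ n_j for each j. Set N = n_1 + ⋯ + n_m, J = i_1 + ⋯ + i_m, and M = ∏_{j=1}^m C(n_j, i_j). Then ∫_0^1 ∏_{j=1}^m B_{i_j}^{n_j}(t) dt = M / ((N+1) · C(N, J)). -/

import Mathlib

/-- The Bernstein polynomial `B_i^n(t) = C(n,i) t^i (1-t)^(n-i)`. -/
noncomputable def bern (n i : ℕ) (t : ℝ) : ℝ :=
  (n.choose i : ℝ) * t ^ i * (1 - t) ^ (n - i)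

lemma beta_nat (b : ℕ) : ∀ a : ℕ,
    ∫ t in (0:ℝ)..1, t ^ a * (1 - t) ^ b
      = (a.factorial * b.factorial : ℝ) / (a + b + 1).factorial := by
  induction b with
  | zero =>
    intro a
    simp [integral_pow, Nat.factorial_succ]
    have hfa : (a.factorial : ℝ) ≠ 0 := by positivity
    push_cast
    rw [eq_div_iff (by positivity)]
    field_simp
  | succ b IH =>
    intro a
    have hu : ∀ x ∈ Set.uIcc (0:ℝ) 1, HasDerivAt (fun t : ℝ => (1 - t) ^ (b + 1))
        (-((b+1) * (1 - x) ^ b)) x := by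
      intro x _
      have h1 : HasDerivAt (fun t : ℝ => 1 - t) (-1) x := by
        simpa using (hasDerivAt_id x).const_sub 1
      have := h1.fun_pow (b + 1)
      simpa [mul_comm, mul_assoc, mul_left_comm] using this
    have hv : ∀ x ∈ Set.uIcc (0:ℝ) 1, HasDerivAt (fun t : ℝ => t ^ (a+1) / (a+1))
        (x ^ a) x := by
      intro x _
      have := (hasDerivAt_pow (a+1) x).div_const (a+1)
      have hne : ((a:ℝ) + 1) ≠ 0 := by positivity
      convert this using 1
      case e'_9 => push_cast; field_simp
      all_goals rfl
    have hint1 : IntervalIntegrable (fun x : ℝ => -((b+1) * (1 - x) ^ b)) MeasureTheory.volume 0 1 := by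
      apply Continuous.intervalIntegrable; continuity
    have hint2 : IntervalIntegrable (fun x : ℝ => x ^ a) MeasureTheory.volume 0 1 := by
      apply Continuous.intervalIntegrable; continuity
    have parts := intervalIntegral.integral_mul_deriv_eq_deriv_mul hu hv hint1 hint2
    have h1 : ∫ t in (0:ℝ)..1, t ^ a * (1 - t) ^ (b+1)
        = ∫ t in (0:ℝ)..1, (1 - t) ^ (b+1) * t ^ a := by
      congr 1; ext t; ring
    rw [h1, parts]
    simp only [one_pow, sub_self, zero_pow (Nat.succ_ne_zero b), zero_mul, zero_div,
      mul_zero, sub_zero, zero_sub]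
    have h2 : ∫ x in (0:ℝ)..1, -((b+1) * (1 - x) ^ b) * (x ^ (a+1) / (a+1))
        = -(((b:ℝ)+1)/((a:ℝ)+1)) * ∫ x in (0:ℝ)..1, x ^ (a+1) * (1 - x) ^ b := by
      rw [← intervalIntegral.integral_const_mul]
      congr 1; ext x
      field_simp
    rw [h2, IH (a+1)]
    have hne1 : ((a:ℝ) + 1) ≠ 0 := by positivity
    have hne2 : ((a + 1 + b + 1).factorial : ℝ) ≠ 0 := by positivity
    have hne3 : ((a + (b+1) + 1).factorial : ℝ) ≠ 0 := by positivity
    have heq : a + 1 + b + 1 = a + (b+1) + 1 := by omega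
    rw [heq] at hne2 ⊢
    simp only [zero_pow (Nat.succ_ne_zero a), zero_div, mul_zero, one_mul, neg_zero,
      zero_sub, neg_neg, sub_neg_eq_add, zero_add]
    rw [neg_mul, neg_neg, div_mul_div_comm, div_eq_div_iff (by positivity) hne3]
    have hfa : ((a+1).factorial : ℝ) = ((a:ℝ)+1) * a.factorial := by
      rw [Nat.factorial_succ]; push_cast; ring
    have hfb : ((b+1).factorial : ℝ) = ((b:ℝ)+1) * b.factorial := by
      rw [Nat.factorial_succ]; push_cast; ring
    rw [hfa, hfb]
    ring

theorem bernstein_product_integral (m : ℕ) (hm : 1 ≤ m) (n i : Fin m → ℕ)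
    (hi : ∀ j, i j ≤ n j)
    (N J M : ℕ) (hN : N = ∑ j, n j) (hJ : J = ∑ j, i j)
    (hM : M = ∏ j, (n j).choose (i j)) :
    ∫ t in (0:ℝ)..1, ∏ j, bern (n j) (i j) t
      = (M : ℝ) / (((N : ℝ) + 1) * (N.choose J : ℝ)) := by
  have hJN : J ≤ N := by
    rw [hJ, hN]; exact Finset.sum_le_sum fun j _ => hi j
  have hsub : ∑ j, (n j - i j) = N - J := by
    rw [hN, hJ, Finset.sum_tsub_distrib _ fun j _ => hi j]
  have hprod : ∀ t : ℝ, ∏ j, bern (n j) (i j) t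
      = (M : ℝ) * (t ^ J * (1 - t) ^ (N - J)) := by
    intro t
    simp only [bern, Finset.prod_mul_distrib, hM]
    rw [Finset.prod_pow_eq_pow_sum, Finset.prod_pow_eq_pow_sum, ← hJ, hsub]
    push_cast
    ring
  simp only [hprod]
  rw [intervalIntegral.integral_const_mul, beta_nat]
  have hNJ : J + (N - J) + 1 = N + 1 := by omega
  rw [hNJ]
  have key : (N.choose J : ℝ) * J.factorial * (N - J).factorial = N.factorial := by
    exact_mod_cast congrArg (Nat.cast (R := ℝ)) (Nat.choose_mul_factorial_mul_factorial hJN)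
  have hfN : ((N+1).factorial : ℝ) = ((N:ℝ)+1) * N.factorial := by
    rw [Nat.factorial_succ]; push_cast; ring
  rw [hfN]
  have h1 : (N.choose J : ℝ) ≠ 0 := by
    exact_mod_cast Nat.choose_pos hJN |>.ne'
  have h2 : (N.factorial : ℝ) ≠ 0 := by positivity
  have h3 : ((N:ℝ)+1) ≠ 0 := by positivity
  field_simp
  linear_combination (M : ℝ) * key
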